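/- Let H_1,…,H_m be r-uniform directed hypergraphs on a common N-element vertex set V, and suppose each H_i contains no member of the family M(r,s). Then there exists U ⊆ V with |U| ≥ c·N^{1/(2r²ms)}, where c = c(r,s,m) > 0, such that for every i ∈ [m], the induced sub-dihypergraph H_i[U] is either a clique (every r-tuple of distinct vertices of U in every order is an edge) or an independent set (no r-tuple from U is an edge). -/

import Mathlib

open Finset

set_option linter.unusedSectionVars false
set_option linter.unusedVariables false

namespace Stmt11

attribute [local instance] Classical.propDecidable

variable {V : Type} [Fintype V]

/-- Update a tuple at one coordinate. -/
def upd {r : ℕ} (g : Fin r → V) (k : Fin r) (x : V) : Fin r → V :=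
  fun j => if j = k then x else g j

theorem upd_apply_self {r : ℕ} (g : Fin r → V) (k : Fin r) (x : V) : upd g k x k = x :=
  if_pos rfl

theorem upd_eq_self {r : ℕ} (g : Fin r → V) (k : Fin r) : upd g k (g k) = g := by
  funext j
  simp only [upd]
  split
  · rename_i h; rw [h]
  · rfl

theorem upd_upd {r : ℕ} (g : Fin r → V) (k : Fin r) (x y : V) :
    upd (upd g k x) k y = upd g k y := by
  funext j
  simp only [upd]
  split <;> rfl

/-- A chain of length `t` for relation `E` at coordinate `k` with values in `X`. -/
def Chain {r : ℕ} (E : Set (Fin r → V)) (k : Fin r) (X : Finset V) (t : ℕ) : Prop :=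
  ∃ f : ℕ → Fin r → V, (∀ a, a < t → f a ∈ E ∧ f a k ∈ X) ∧
    (∀ a a', a < a' → a' < t → upd (f a) k (f a' k) ∉ E)

theorem chain_mono_X {r : ℕ} {E : Set (Fin r → V)} {k : Fin r} {X Y : Finset V} {t : ℕ}
    (hXY : X ⊆ Y) (h : Chain E k X t) : Chain E k Y t := by
  obtain ⟨f, h1, h2⟩ := h
  exact ⟨f, fun a ha => ⟨(h1 a ha).1, hXY (h1 a ha).2⟩, h2⟩

theorem chain_mono_t {r : ℕ} {E : Set (Fin r → V)} {k : Fin r} {X : Finset V} {t t' : ℕ}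
    (htt : t ≤ t') (h : Chain E k X t') : Chain E k X t := by
  obtain ⟨f, h1, h2⟩ := h
  exact ⟨f, fun a ha => h1 a (lt_of_lt_of_le ha htt),
    fun a a' haa ha' => h2 a a' haa (lt_of_lt_of_le ha' htt)⟩

theorem chain_lt {r s : ℕ} {E : Set (Fin r → V)} {k : Fin r} {X : Finset V} {t : ℕ}
    (hM : ¬ Chain E k (univ : Finset V) s) (h : Chain E k X t) : t < s := by
  by_contra hc
  push_neg at hc
  exact hM (chain_mono_X (subset_univ X) (chain_mono_t hc h))

theorem chain_bdd {r s : ℕ} {E : Set (Fin r → V)} {k : Fin r} {X : Finset V}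
    (hM : ¬ Chain E k (univ : Finset V) s) : BddAbove {t | Chain E k X t} :=
  ⟨s, fun t ht => le_of_lt (chain_lt hM ht)⟩

/-- Rank: the longest chain. -/
noncomputable def rk {r : ℕ} (E : Set (Fin r → V)) (k : Fin r) (X : Finset V) : ℕ :=
  sSup {t | Chain E k X t}

theorem nat_sSup_le {S : Set ℕ} {n : ℕ} (h : ∀ t ∈ S, t ≤ n) : sSup S ≤ n := by
  rcases S.eq_empty_or_nonempty with h' | h'
  · simp [h']
  · exact csSup_le h' h

theorem rk_le {r s : ℕ} {E : Set (Fin r → V)} {k : Fin r} {X : Finset V}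
    (hM : ¬ Chain E k (univ : Finset V) s) : rk E k X ≤ s - 1 := by
  apply nat_sSup_le
  intro t ht
  have := chain_lt hM ht
  omega

theorem rk_mono {r : ℕ} {E : Set (Fin r → V)} {k : Fin r} {X Y : Finset V} {s : ℕ}
    (hM : ¬ Chain E k (univ : Finset V) s) (hXY : X ⊆ Y) : rk E k X ≤ rk E k Y := by
  apply nat_sSup_le
  intro t ht
  exact le_csSup (chain_bdd hM) (chain_mono_X hXY ht)

/-- One chain extension step: prepend an edge to a chain lying in the non-edge side. -/
theorem chain_succ {r : ℕ} {E : Set (Fin r → V)} {k : Fin r} {X : Finset V} {t : ℕ}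
    {g : Fin r → V} {x : V} (hx : x ∈ X) (he : upd g k x ∈ E)
    (h : Chain E k (X.filter fun y => upd g k y ∉ E) t) :
    Chain E k X (t + 1) := by
  classical
  obtain ⟨f, h1, h2⟩ := h
  refine ⟨fun n => if n = 0 then upd g k x else f (n - 1), ?_, ?_⟩
  · intro a ha
    by_cases ha0 : a = 0
    · subst ha0
      norm_num
      exact ⟨he, by rw [upd_apply_self]; exact hx⟩
    · simp only [if_neg ha0]
      have h1' := h1 (a - 1) (by omega)
      exact ⟨h1'.1, (mem_filter.mp h1'.2).1⟩
  · intro a a' haa ha'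
    have ha'0 : a' ≠ 0 := by omega
    by_cases ha0 : a = 0
    · subst ha0
      norm_num [if_neg ha'0]
      have h1' := h1 (a' - 1) (by omega)
      have hne := (mem_filter.mp h1'.2).2
      rw [upd_upd]
      exact hne
    · simp only [if_neg ha0, if_neg ha'0]
      exact h2 (a - 1) (a' - 1) (by omega) (by omega)

/-- The rank drop lemma. -/
theorem rk_drop {r s : ℕ} {E : Set (Fin r → V)} {k : Fin r} {X : Finset V}
    {g : Fin r → V} {x : V} (hM : ¬ Chain E k (univ : Finset V) s)
    (hx : x ∈ X) (he : upd g k x ∈ E) :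
    rk E k (X.filter fun y => upd g k y ∉ E) < rk E k X := by
  classical
  have h0 : Chain E k (X.filter fun y => upd g k y ∉ E) 0 :=
    ⟨fun _ => g, fun a ha => absurd ha (by omega), fun a a' _ ha' => absurd ha' (by omega)⟩
  have hmem : Chain E k (X.filter fun y => upd g k y ∉ E)
      (rk E k (X.filter fun y => upd g k y ∉ E)) :=
    Nat.sSup_mem (⟨0, h0⟩ : Set.Nonempty {t | Chain E k (X.filter fun y => upd g k y ∉ E) t})
      (chain_bdd (s := s) hM)
  have hsucc := chain_succ hx he hmem
  have : rk E k (X.filter fun y => upd g k y ∉ E) + 1 ≤ rk E k X :=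
    le_csSup (chain_bdd hM) hsucc
  omega


/-- Total rank over all pairs (i,k). -/
noncomputable def mu {r m : ℕ} (E : Fin m → Set (Fin r → V)) (X : Finset V) : ℕ :=
  ∑ q : Fin m × Fin r, rk (E q.1) q.2 X

/-- The "every active stem is almost full" property. -/
def Star {r m : ℕ} (E : Fin m → Set (Fin r → V)) (XA : Finset V) (κ : ℕ) : Prop :=
  ∀ (i : Fin m) (k : Fin r) (g : Fin r → V), (∃ x ∈ XA, upd g k x ∈ E i) →
    κ * (XA.filter fun x => upd g k x ∉ E i).card < XA.card

theorem mu_pos_of_not_star {r s m : ℕ} {E : Fin m → Set (Fin r → V)} {X : Finset V} {κ : ℕ}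
    (hM : ∀ i k, ¬ Chain (E i) k (univ : Finset V) s) (h : ¬ Star E X κ) : 1 ≤ mu E X := by
  simp only [Star, not_forall] at h
  obtain ⟨i, k, g, hact, -⟩ := h
  obtain ⟨x, hx, he⟩ := hact
  have hch : Chain (E i) k X 1 := by
    refine ⟨fun _ => upd g k x, ?_, ?_⟩
    · intro a ha
      refine ⟨he, ?_⟩
      show upd g k x k ∈ X
      rw [upd_apply_self]; exact hx
    · intro a a' haa ha'
      omega
  have h1 : 1 ≤ rk (E i) k X := le_csSup (chain_bdd (hM i k)) hch
  calc 1 ≤ rk (E i) k X := h1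
    _ ≤ mu E X := Finset.single_le_sum (f := fun q : Fin m × Fin r => rk (E q.1) q.2 X)
        (fun _ _ => Nat.zero_le _) (Finset.mem_univ (i, k))

theorem mu_lt {r s m : ℕ} {E : Fin m → Set (Fin r → V)} {X : Finset V}
    (hM : ∀ i k, ¬ Chain (E i) k (univ : Finset V) s)
    {i : Fin m} {k : Fin r} {g : Fin r → V} {x : V} (hx : x ∈ X) (he : upd g k x ∈ E i) :
    mu E (X.filter fun y => upd g k y ∉ E i) < mu E X := by
  apply Finset.sum_lt_sum
  · intro q _
    exact rk_mono (s := s) (hM q.1 q.2) (filter_subset _ _)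
  · exact ⟨(i, k), Finset.mem_univ _, rk_drop (hM i k) hx he⟩

/-- Phase A: shrink to a set satisfying Star, losing at most factor κ^n. -/
theorem phaseA {r s m : ℕ} {E : Fin m → Set (Fin r → V)}
    (hM : ∀ i k, ¬ Chain (E i) k (univ : Finset V) s) (κ : ℕ) (hκ : 1 ≤ κ) :
    ∀ n (X : Finset V), mu E X ≤ n →
      ∃ X', X' ⊆ X ∧ Star E X' κ ∧ X.card ≤ κ ^ n * X'.card := by
  intro n
  induction n with
  | zero =>
    intro X hX
    refine ⟨X, Finset.Subset.refl X, ?_, by simpa using Nat.le_refl _⟩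
    by_contra hstar
    have := mu_pos_of_not_star (s := s) hM hstar
    omega
  | succ n ih =>
    intro X hX
    by_cases hstar : Star E X κ
    · refine ⟨X, Finset.Subset.refl X, hstar, ?_⟩
      exact Nat.le_mul_of_pos_left _ (pow_pos hκ _)
    · simp only [Star, not_forall] at hstar
      obtain ⟨i, k, g, hact, hbig⟩ := hstar
      obtain ⟨x, hx, he⟩ := hact
      push_neg at hbig
      set X₁ := X.filter fun y => upd g k y ∉ E i with hX₁
      have hmu : mu E X₁ < mu E X := mu_lt (s := s) hM hx he
      obtain ⟨X', hsub, hstar', hcard⟩ := ih X₁ (by omega)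
      refine ⟨X', hsub.trans (filter_subset _ _), hstar', ?_⟩
      calc X.card ≤ κ * X₁.card := hbig
        _ ≤ κ * (κ ^ n * X'.card) := Nat.mul_le_mul_left _ hcard
        _ = κ ^ (n + 1) * X'.card := by ring


/-- The "alive pattern" property: a partial pattern extends to an edge inside XA. -/
def Alive {r : ℕ} (E : Set (Fin r → V)) (XA : Finset V) (p : Fin r → Option V) : Prop :=
  ∃ w : Fin r → V, Function.Injective w ∧ (∀ j, w j ∈ XA) ∧
    (∀ j x, p j = some x → w j = x) ∧ w ∈ E

/-- Every partial pattern with values in U is alive (for every i that is alive at all). -/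
def I5 {r m : ℕ} (E : Fin m → Set (Fin r → V)) (XA U : Finset V) : Prop :=
  ∀ i, Alive (E i) XA (fun _ => none) → ∀ p : Fin r → Option V,
    (∀ j x, p j = some x → x ∈ U) → (∀ j j' x, p j = some x → p j' = some x → j = j') →
    Alive (E i) XA p

theorem card_triple_biUnion_le {α β γ δ : Type*} [DecidableEq δ]
    (A : Finset α) (B : Finset β) (C : Finset γ) (F : α → β → γ → Finset δ) {n : ℕ}
    (h : ∀ a b c, (F a b c).card ≤ n) :
    (A.biUnion fun a => B.biUnion fun b => C.biUnion fun c => F a b c).card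
      ≤ A.card * B.card * C.card * n := by
  classical
  calc (A.biUnion fun a => B.biUnion fun b => C.biUnion fun c => F a b c).card
      ≤ A.card * (B.card * (C.card * n)) := by
        apply Finset.card_biUnion_le_card_mul
        intro a _
        apply Finset.card_biUnion_le_card_mul
        intro b _
        apply Finset.card_biUnion_le_card_mul
        intro c _
        exact h a b c
    _ = A.card * B.card * C.card * n := by ring

theorem greedy {r m : ℕ} (E : Fin m → Set (Fin r → V)) (XA : Finset V) (u : ℕ)
    (hr : 1 ≤ r) (hm : 1 ≤ m)
    (hstar : Star E XA (2 * (m * r * (u + 1) ^ r) * (r + u + 1)))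
    (hsz : 2 * (m * r * (u + 1) ^ r) * (r + u + 1) ≤ XA.card) :
    ∀ j, j ≤ u → ∃ U : Finset V, U ⊆ XA ∧ U.card = j ∧ I5 E XA U := by
  have hK0pos : 0 < m * r * (u + 1) ^ r :=
    Nat.mul_pos (Nat.mul_pos hm hr) (pow_pos (by omega) _)
  set K0 := m * r * (u + 1) ^ r with hK0def
  set κ := 2 * K0 * (r + u + 1) with hκdef
  have hκpos : 0 < κ := by positivity
  have hXA1 : 0 < XA.card := lt_of_lt_of_le hκpos hsz
  obtain ⟨v₀, hv₀⟩ := Finset.card_pos.mp hXA1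
  -- choice of witnesses for alive patterns
  have hwex : ∀ (i : Fin m) (p : Fin r → Option V), ∃ w : Fin r → V,
      Alive (E i) XA p → (Function.Injective w ∧ (∀ j, w j ∈ XA) ∧
        (∀ jj x, p jj = some x → w jj = x) ∧ w ∈ E i) := by
    intro i p
    by_cases h : Alive (E i) XA p
    · obtain ⟨w, hw⟩ := h
      exact ⟨w, fun _ => hw⟩
    · exact ⟨fun _ => v₀, fun hc => absurd hc h⟩
  choose gw hgw using hwex
  intro j
  induction j with
  | zero =>
    intro _
    refine ⟨∅, Finset.empty_subset _, rfl, ?_⟩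
    intro i halive p hran hpinj
    have hp : ∀ jj, p jj = none := by
      intro jj
      cases hpj : p jj with
      | none => rfl
      | some x => exact absurd (hran jj x hpj) (by simp)
    have : p = fun _ => none := funext hp
    rw [this]
    exact halive
  | succ j ih =>
    intro hj
    obtain ⟨U, hUA, hUcard, hI5⟩ := ih (by omega)
    set pat : Finset (Fin r → Option V) :=
      Fintype.piFinset (fun _ => insert none (U.image some)) with hpatdef
    set F : Fin m → (Fin r → Option V) → Fin r → Finset V := fun i p p₀ =>
      if Alive (E i) XA p ∧ p p₀ = none then
        (XA.filter fun x => upd (gw i p) p₀ x ∉ E i) ∪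
          (Finset.univ : Finset (Fin r)).image (gw i p)
      else ∅ with hFdef
    set bad : Finset V := Finset.univ.biUnion (fun i : Fin m =>
      pat.biUnion (fun p => (Finset.univ : Finset (Fin r)).biUnion (fun p₀ => F i p p₀)))
      with hbaddef
    -- inner cardinality bound
    set Q := (XA.card - 1) / κ + r with hQdef
    have hinner : ∀ i p p₀, (F i p p₀).card ≤ Q := by
      intro i p p₀
      simp only [hFdef]
      split
      case isTrue h =>
        obtain ⟨hA, -⟩ := h
        have hspec := hgw i p hA
        have hact : ∃ x ∈ XA, upd (gw i p) p₀ x ∈ E i :=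
          ⟨gw i p p₀, hspec.2.1 p₀, by rw [upd_eq_self]; exact hspec.2.2.2⟩
        have h1 : κ * (XA.filter fun x => upd (gw i p) p₀ x ∉ E i).card < XA.card :=
          hstar i p₀ (gw i p) hact
        have h1' : (XA.filter fun x => upd (gw i p) p₀ x ∉ E i).card ≤ (XA.card - 1) / κ := by
          rw [Nat.le_div_iff_mul_le hκpos, Nat.mul_comm]
          omega
        have h2 : ((Finset.univ : Finset (Fin r)).image (gw i p)).card ≤ r :=
          le_trans Finset.card_image_le (by simp)
        calc ((XA.filter fun x => upd (gw i p) p₀ x ∉ E i) ∪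
              (Finset.univ : Finset (Fin r)).image (gw i p)).card
            ≤ (XA.filter fun x => upd (gw i p) p₀ x ∉ E i).card +
              ((Finset.univ : Finset (Fin r)).image (gw i p)).card := Finset.card_union_le _ _
          _ ≤ (XA.card - 1) / κ + r := Nat.add_le_add h1' h2
      case isFalse => simp
    have hpatcard : pat.card = (j + 1) ^ r := by
      rw [hpatdef, Fintype.card_piFinset]
      have h1 : (insert none (U.image some)).card = j + 1 := by
        rw [Finset.card_insert_of_notMem (by simp),
          Finset.card_image_of_injective _ (Option.some_injective V), hUcard]
      simp [h1]
    have hbadcard : bad.card ≤ m * (j + 1) ^ r * r * Q := by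
      rw [hbaddef]
      have := card_triple_biUnion_le Finset.univ pat Finset.univ F hinner
      simpa [hpatcard] using this
    -- room for a new vertex
    have hQbound : κ * Q ≤ XA.card + κ * r := by
      rw [hQdef, Nat.mul_add]
      have h1 : κ * ((XA.card - 1) / κ) ≤ XA.card - 1 := by
        rw [Nat.mul_comm]
        exact Nat.div_mul_le_self _ _
      omega
    have hκbad : κ * bad.card ≤ K0 * XA.card + K0 * (κ * r) := by
      have h1 : κ * bad.card ≤ κ * (m * (j + 1) ^ r * r * Q) :=
        Nat.mul_le_mul_left _ hbadcard
      have h2 : m * (j + 1) ^ r * r ≤ K0 := by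
        rw [hK0def]
        have : (j + 1) ^ r ≤ (u + 1) ^ r := Nat.pow_le_pow_left (by omega) r
        calc m * (j + 1) ^ r * r ≤ m * (u + 1) ^ r * r :=
              Nat.mul_le_mul_right _ (Nat.mul_le_mul_left _ this)
          _ = m * r * (u + 1) ^ r := by ring
      calc κ * bad.card ≤ κ * (m * (j + 1) ^ r * r * Q) := h1
        _ = m * (j + 1) ^ r * r * (κ * Q) := by ring
        _ ≤ K0 * (κ * Q) := Nat.mul_le_mul_right _ h2
        _ ≤ K0 * (XA.card + κ * r) := Nat.mul_le_mul_left _ hQbound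
        _ = K0 * XA.card + K0 * (κ * r) := by ring
    have hroom : j + bad.card + 1 ≤ XA.card := by
      have key : u + K0 * r + K0 ≤ κ := by
        have h1 : u ≤ K0 * u := Nat.le_mul_of_pos_left u hK0pos
        have h2 : κ = 2 * (K0 * r) + 2 * (K0 * u) + 2 * K0 := by rw [hκdef]; ring
        omega
      refine Nat.le_of_mul_le_mul_left ?_ hκpos
      have e1 : κ * (j + bad.card + 1) = κ * (j + 1) + κ * bad.card := by ring
      have e2 : κ * (j + 1) ≤ κ * u := Nat.mul_le_mul_left _ (by omega)
      have t1 : κ * u ≤ u * XA.card := by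
        calc κ * u = u * κ := by ring
          _ ≤ u * XA.card := Nat.mul_le_mul_left _ hsz
      have t2 : K0 * (κ * r) ≤ K0 * r * XA.card := by
        calc K0 * (κ * r) = K0 * r * κ := by ring
          _ ≤ K0 * r * XA.card := Nat.mul_le_mul_left _ hsz
      have t3 : (u + K0 * r + K0) * XA.card ≤ κ * XA.card := Nat.mul_le_mul_right _ key
      have t4 : (u + K0 * r + K0) * XA.card
          = u * XA.card + K0 * r * XA.card + K0 * XA.card := by ring
      omega
    -- pick the new vertex
    have hsd : (XA \ (U ∪ bad)).Nonempty := by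
      rw [← Finset.card_pos]
      have h1 : (U ∪ bad).card ≤ U.card + bad.card := Finset.card_union_le _ _
      have h2 : XA.card - (U ∪ bad).card ≤ (XA \ (U ∪ bad)).card := Finset.le_card_sdiff _ _
      omega
    obtain ⟨us, hus⟩ := hsd
    rw [Finset.mem_sdiff, Finset.notMem_union] at hus
    have husXA := hus.1
    have husU := hus.2.1
    have husbad := hus.2.2
    refine ⟨insert us U, Finset.insert_subset husXA hUA, ?_, ?_⟩
    · rw [Finset.card_insert_of_notMem husU, hUcard]
    -- the invariant
    intro i halive p hran hpinj
    by_cases hc : ∀ jj x, p jj = some x → x ∈ U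
    · exact hI5 i halive p hc hpinj
    · push_neg at hc
      obtain ⟨p₀, x, hpx, hxU⟩ := hc
      have hxus : us = x := by
        have hx2 := hran p₀ x hpx
        rw [Finset.mem_insert] at hx2
        rcases hx2 with h | h
        · exact h.symm
        · exact absurd h hxU
      subst hxus
      -- the freed pattern
      set p' : Fin r → Option V := fun jj => if jj = p₀ then none else p jj with hp'def
      have hp'ran : ∀ jj y, p' jj = some y → y ∈ U := by
        intro jj y hjy
        simp only [hp'def] at hjy
        by_cases hjj : jj = p₀
        · rw [if_pos hjj] at hjy; exact absurd hjy (by simp)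
        · rw [if_neg hjj] at hjy
          have hyU := hran jj y hjy
          rw [Finset.mem_insert] at hyU
          rcases hyU with h | h
          · subst h
            exact absurd (hpinj jj p₀ y hjy hpx) hjj
          · exact h
      have hp'inj : ∀ jj jj' y, p' jj = some y → p' jj' = some y → jj = jj' := by
        intro jj jj' y h1 h2
        simp only [hp'def] at h1 h2
        by_cases hjj : jj = p₀
        · rw [if_pos hjj] at h1; exact absurd h1 (by simp)
        · by_cases hjj' : jj' = p₀
          · rw [if_pos hjj'] at h2; exact absurd h2 (by simp)
          · rw [if_neg hjj] at h1; rw [if_neg hjj'] at h2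
            exact hpinj jj jj' y h1 h2
      have hA' : Alive (E i) XA p' := hI5 i halive p' hp'ran hp'inj
      have hspec := hgw i p' hA'
      have hp'pat : p' ∈ pat := by
        rw [hpatdef, Fintype.mem_piFinset]
        intro jj
        simp only [hp'def]
        by_cases hjj : jj = p₀
        · rw [if_pos hjj]; exact Finset.mem_insert_self _ _
        · rw [if_neg hjj]
          cases hpj : p jj with
          | none => exact Finset.mem_insert_self _ _
          | some y =>
            have hyU : y ∈ U := hp'ran jj y (by simp only [hp'def, if_neg hjj]; exact hpj)
            exact Finset.mem_insert_of_mem (Finset.mem_image.mpr ⟨y, hyU, rfl⟩)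
      have hp'p₀ : p' p₀ = none := by simp only [hp'def, if_pos rfl]
      -- us is not in the bad set for (i, p', p₀)
      have hnb : us ∉ (XA.filter fun y => upd (gw i p') p₀ y ∉ E i) ∪
          (Finset.univ : Finset (Fin r)).image (gw i p') := by
        intro hmem
        apply husbad
        rw [hbaddef]
        refine Finset.mem_biUnion.mpr ⟨i, Finset.mem_univ _, ?_⟩
        refine Finset.mem_biUnion.mpr ⟨p', hp'pat, ?_⟩
        refine Finset.mem_biUnion.mpr ⟨p₀, Finset.mem_univ _, ?_⟩
        rw [hFdef]
        simp only []
        rw [if_pos ⟨hA', hp'p₀⟩]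
        exact hmem
      rw [Finset.notMem_union] at hnb
      obtain ⟨hnb1, hnb2⟩ := hnb
      have hedge : upd (gw i p') p₀ us ∈ E i := by
        by_contra h
        exact hnb1 (Finset.mem_filter.mpr ⟨husXA, h⟩)
      have hnoteq : ∀ jj, gw i p' jj ≠ us := by
        intro jj h
        exact hnb2 (Finset.mem_image.mpr ⟨jj, Finset.mem_univ _, h⟩)
      refine ⟨upd (gw i p') p₀ us, ?_, ?_, ?_, hedge⟩
      · -- injectivity
        intro a b hab
        simp only [upd] at hab
        by_cases ha : a = p₀ <;> by_cases hb : b = p₀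
        · rw [ha, hb]
        · rw [if_pos ha, if_neg hb] at hab
          exact absurd hab.symm (hnoteq b)
        · rw [if_neg ha, if_pos hb] at hab
          exact absurd hab (hnoteq a)
        · rw [if_neg ha, if_neg hb] at hab
          exact hspec.1 hab
      · -- membership in XA
        intro jj
        simp only [upd]
        by_cases hjj : jj = p₀
        · rw [if_pos hjj]; exact husXA
        · rw [if_neg hjj]; exact hspec.2.1 jj
      · -- extends p
        intro jj y hjy
        simp only [upd]
        by_cases hjj : jj = p₀
        · rw [if_pos hjj]
          subst hjj
          rw [hpx] at hjy
          exact Option.some_inj.mp hjy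
        · rw [if_neg hjj]
          exact hspec.2.2.1 jj y (by simp only [hp'def, if_neg hjj]; exact hjy)

/-- Homogeneity of U from the invariant. -/
theorem homog_of_I5 {r m : ℕ} {E : Fin m → Set (Fin r → V)} {XA U : Finset V}
    (hE : ∀ i w, w ∈ E i → Function.Injective w) (hUA : U ⊆ XA) (h5 : I5 E XA U) :
    ∀ i : Fin m,
      (∀ w : Fin r → V, Function.Injective w → (∀ j, w j ∈ U) → w ∈ E i) ∨
      (∀ w : Fin r → V, (∀ j, w j ∈ U) → w ∉ E i) := by
  intro i
  by_cases halive : Alive (E i) XA (fun _ => none)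
  · left
    intro w hwi hwU
    have hA := h5 i halive (fun jj => some (w jj))
      (fun jj x hx => by
        have h2 : w jj = x := Option.some_inj.mp hx
        rw [← h2]; exact hwU jj)
      (fun jj jj' x h1 h2 => hwi ((Option.some_inj.mp h1).trans (Option.some_inj.mp h2).symm))
    obtain ⟨w', _, _, hext, hEw⟩ := hA
    have : w' = w := funext fun jj => hext jj (w jj) rfl
    rw [← this]
    exact hEw
  · right
    intro w hwU hwE
    exact halive ⟨w, hE i w hwE, fun jj => hUA (hwU jj), fun _ _ h => absurd h (by simp), hwE⟩

/-- Main finite lemma: if N is large enough in terms of u, there is a homogeneous set of size u. -/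
theorem main_nat {r s m : ℕ} (hr : 1 ≤ r) (hs : 1 ≤ s) (hm : 1 ≤ m)
    (E : Fin m → Set (Fin r → V))
    (hE : ∀ i w, w ∈ E i → Function.Injective w)
    (hM : ∀ i k, ¬ Chain (E i) k (univ : Finset V) s)
    (u : ℕ)
    (hN : (2 * (m * r * (u + 1) ^ r) * (r + u + 1)) ^ (r * m * (s - 1) + 1) ≤ Fintype.card V) :
    ∃ U : Finset V, U.card = u ∧ ∀ i : Fin m,
      (∀ w : Fin r → V, Function.Injective w → (∀ j, w j ∈ U) → w ∈ E i) ∨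
      (∀ w : Fin r → V, (∀ j, w j ∈ U) → w ∉ E i) := by
  classical
  set κ := 2 * (m * r * (u + 1) ^ r) * (r + u + 1) with hκdef
  have hκ1 : 0 < κ := by positivity
  have hmuV : mu E (univ : Finset V) ≤ r * m * (s - 1) := by
    rw [mu]
    calc ∑ q : Fin m × Fin r, rk (E q.1) q.2 (univ : Finset V)
        ≤ ∑ _q : Fin m × Fin r, (s - 1) := Finset.sum_le_sum (fun q _ => rk_le (hM q.1 q.2))
      _ = m * r * (s - 1) := by
          rw [Finset.sum_const, Finset.card_univ]
          simp [Fintype.card_prod, mul_assoc, smul_eq_mul]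
      _ = r * m * (s - 1) := by ring
  obtain ⟨XA, hXAsub, hstar, hcard⟩ :=
    phaseA (E := E) hM κ hκ1 (r * m * (s - 1)) (univ : Finset V) hmuV
  have hNV : (univ : Finset V).card = Fintype.card V := Finset.card_univ
  have hXAκ : κ ≤ XA.card := by
    have h1 : κ ^ (r * m * (s - 1)) * κ ≤ κ ^ (r * m * (s - 1)) * XA.card := by
      calc κ ^ (r * m * (s - 1)) * κ = κ ^ (r * m * (s - 1) + 1) := by ring
        _ ≤ Fintype.card V := hN
        _ = (univ : Finset V).card := hNV.symm
        _ ≤ κ ^ (r * m * (s - 1)) * XA.card := hcard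
    exact Nat.le_of_mul_le_mul_left h1 (pow_pos hκ1 _)
  obtain ⟨U, hUXA, hUcard, hI5⟩ := greedy E XA u hr hm hstar hXAκ u (le_refl u)
  exact ⟨U, hUcard, homog_of_I5 hE hUXA hI5⟩



/-- Translate the no-M hypothesis to the no-chain form. -/
theorem noM_chain {r s m : ℕ} {V : Type} [Fintype V] {E : Fin m → Set (Fin r → V)}
    (hnoM : ∀ i : Fin m, ∀ k : Fin r, ¬ ∃ u : Fin s → Fin r → V,
      (∀ a : Fin s, (fun j => if j = k then u a k else u a j) ∈ E i) ∧
      (∀ a a' : Fin s, a < a' →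
        (fun j => if j = k then u a' k else u a j) ∉ E i)) :
    ∀ i k, ¬ Chain (E i) k (univ : Finset V) s := by
  intro i k hch
  obtain ⟨f, h1, h2⟩ := hch
  apply hnoM i k
  refine ⟨fun a => f a, ?_, ?_⟩
  · intro a
    have he := (h1 a a.isLt).1
    have heq : (fun j => if j = k then f (a : ℕ) k else f (a : ℕ) j) = f (a : ℕ) := by
      funext jj
      by_cases hjj : jj = k
      · rw [if_pos hjj, hjj]
      · rw [if_neg hjj]
    show (fun j => if j = k then f (a : ℕ) k else f (a : ℕ) j) ∈ E i
    rw [heq]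
    exact he
  · intro a a' haa
    show upd (f (a : ℕ)) k (f (a' : ℕ) k) ∉ E i
    exact h2 (a : ℕ) (a' : ℕ) haa a'.isLt

end Stmt11

/-- If dihypergraphs H₁,…,H_m on N vertices contain no member of M(r,s), there is a set
of ≥ c·N^(1/(2r²ms)) vertices on which each H_i is a clique or an independent set. -/
theorem stmt_11 (r s m : ℕ) (hr : 0 < r) (hs : 0 < s) (hm : 0 < m) :
    ∃ c : ℝ, 0 < c ∧
      ∀ (V : Type) [Fintype V] (N : ℕ), Fintype.card V = N →
      ∀ E : Fin m → Set (Fin r → V),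
      (∀ i, ∀ w ∈ E i, Function.Injective w) →
      (∀ i : Fin m, ∀ k : Fin r, ¬ ∃ u : Fin s → Fin r → V,
        (∀ a : Fin s, (fun j => if j = k then u a k else u a j) ∈ E i) ∧
        (∀ a a' : Fin s, a < a' →
          (fun j => if j = k then u a' k else u a j) ∉ E i)) →
      ∃ U : Finset V,
        c * (N : ℝ) ^ ((1 : ℝ) / (2 * r ^ 2 * m * s)) ≤ (U.card : ℝ) ∧
        ∀ i : Fin m,
          (∀ w : Fin r → V, Function.Injective w → (∀ j, w j ∈ U) → w ∈ E i) ∨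
          (∀ w : Fin r → V, (∀ j, w j ∈ U) → w ∉ E i) := by
  classical
  set T : ℕ := r * m * (s - 1) with hT
  set A0 : ℕ := 2 * m * r * (r + 1) with hA0
  set G : ℕ := (r + 1) * (T + 1) with hG
  have hA01 : 1 ≤ A0 := by have h : 0 < A0 := by positivity
                           omega
  set D : ℝ := 2 * (A0 : ℝ) ^ (T + 1) with hD
  have hA0R : (1 : ℝ) ≤ (A0 : ℝ) := by exact_mod_cast hA01
  have hA0p : (1 : ℝ) ≤ (A0 : ℝ) ^ (T + 1) := one_le_pow₀ hA0R
  have hD1 : (1 : ℝ) ≤ D := by rw [hD]; nlinarith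
  have hDpos : (0 : ℝ) < D := lt_of_lt_of_le one_pos hD1
  -- the ℕ exponent bound
  have hGnat : G ≤ 2 * r ^ 2 * m * s := by
    rw [hG, hT]
    obtain ⟨s1, rfl⟩ : ∃ s1, s = s1 + 1 := ⟨s - 1, by omega⟩
    have h1 : r * m * s1 ≤ r * (r * m * s1) := Nat.le_mul_of_pos_left _ hr
    have h3 : 1 ≤ r * m := Nat.mul_pos hr hm
    have h4 : r * 1 ≤ r * (r * m) := Nat.mul_le_mul_left r h3
    have h2 : r + 1 ≤ 2 * r ^ 2 * m := by nlinarith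
    have hexp : (r + 1) * (r * m * (s1 + 1 - 1) + 1)
        = r * (r * m * s1) + (r * m * s1) + (r + 1) := by
      simp only [Nat.add_sub_cancel]
      ring
    have hexp2 : 2 * r ^ 2 * m * (s1 + 1) = r * (r * m * s1) + r * (r * m * s1) + 2 * r ^ 2 * m := by
      ring
    linarith
  refine ⟨1 / (2 * D), by positivity, ?_⟩
  intro V _ N hNV E hEinj hnoM
  have hM : ∀ i k, ¬ Stmt11.Chain (E i) k (univ : Finset V) s := Stmt11.noM_chain hnoM
  have hrpos : (0 : ℝ) < (r : ℝ) := by exact_mod_cast hr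
  have hmpos : (0 : ℝ) < (m : ℝ) := by exact_mod_cast hm
  have hspos : (0 : ℝ) < (s : ℝ) := by exact_mod_cast hs
  have hden : (0 : ℝ) < 2 * (r : ℝ) ^ 2 * (m : ℝ) * (s : ℝ) := by positivity
  set ε : ℝ := (1 : ℝ) / (2 * (r : ℝ) ^ 2 * (m : ℝ) * (s : ℝ)) with hε
  have hεpos : 0 < ε := by rw [hε]; positivity
  have hεG : ε * (G : ℝ) ≤ 1 := by
    rw [hε, div_mul_eq_mul_div, one_mul, div_le_one hden]
    exact_mod_cast hGnat
  by_cases hbig : (N : ℝ) ^ ε < 2 * D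
  · -- small case
    have hcb : 1 / (2 * D) * (N : ℝ) ^ ε ≤ 1 := by
      rw [div_mul_eq_mul_div, one_mul, div_le_one (by positivity)]
      exact le_of_lt hbig
    rcases Nat.eq_zero_or_pos N with h0 | hpos
    · subst h0
      refine ⟨∅, ?_, ?_⟩
      · simp only [Finset.card_empty, Nat.cast_zero]
        rw [Real.zero_rpow (ne_of_gt hεpos), mul_zero]
      · intro i
        right
        intro w hw _
        exact absurd (hw ⟨0, hr⟩) (by simp)
    · have hVpos : 0 < Fintype.card V := by rw [hNV]; exact hpos
      obtain ⟨v⟩ := Fintype.card_pos_iff.mp hVpos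
      refine ⟨{v}, ?_, ?_⟩
      · rw [Finset.card_singleton, Nat.cast_one]
        exact hcb
      · intro i
        by_cases hone : (fun _ => v : Fin r → V) ∈ E i
        · left
          intro w hwi hwU
          have hwv : w = fun _ => v := funext fun j => by simpa using hwU j
          rw [hwv]
          exact hone
        · right
          intro w hwU hwE
          have hwv : w = fun _ => v := funext fun j => by simpa using hwU j
          rw [hwv] at hwE
          exact hone hwE
  · -- big case
    push_neg at hbig
    have hN1 : 1 ≤ N := by
      by_contra h
      have hN0 : N = 0 := by omega
      rw [hN0, Nat.cast_zero, Real.zero_rpow (ne_of_gt hεpos)] at hbig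
      linarith
    have hNR1 : (1 : ℝ) ≤ (N : ℝ) := by exact_mod_cast hN1
    have hNRpos : (0 : ℝ) < (N : ℝ) ^ ε := Real.rpow_pos_of_pos (by linarith) ε
    set u := ⌊(N : ℝ) ^ ε / D⌋₊ with hu
    have hx2 : 2 ≤ (N : ℝ) ^ ε / D := by rw [le_div_iff₀ hDpos]; linarith
    have hu1 : (u : ℝ) ≤ (N : ℝ) ^ ε / D := Nat.floor_le (by positivity)
    have hu2 : (N : ℝ) ^ ε / D < (u : ℝ) + 1 := Nat.lt_floor_add_one _
    have hub : ((u : ℝ) + 1) ≤ 2 * (N : ℝ) ^ ε / D := by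
      have h1 : (1 : ℝ) ≤ (N : ℝ) ^ ε / D := by linarith
      have h2 : 2 * (N : ℝ) ^ ε / D = (N : ℝ) ^ ε / D + (N : ℝ) ^ ε / D := by ring
      linarith
    -- κ ≤ A0 * (u+1)^(r+1)  in ℕ
    have hκA : 2 * (m * r * (u + 1) ^ r) * (r + u + 1) ≤ A0 * (u + 1) ^ (r + 1) := by
      have h1 : r + u + 1 ≤ (r + 1) * (u + 1) := by nlinarith
      calc 2 * (m * r * (u + 1) ^ r) * (r + u + 1)
          ≤ 2 * (m * r * (u + 1) ^ r) * ((r + 1) * (u + 1)) := Nat.mul_le_mul_left _ h1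
        _ = A0 * (u + 1) ^ (r + 1) := by rw [hA0]; ring
    -- the real bound
    have hreal : ((A0 : ℝ) * ((u : ℝ) + 1) ^ (r + 1)) ^ (T + 1) ≤ (N : ℝ) := by
      have hstep : (2 * (N : ℝ) ^ ε / D) ^ G = (2 / D) ^ G * ((N : ℝ) ^ ε) ^ G := by
        rw [← mul_pow]
        congr 1
        ring
      have h2D : (2 : ℝ) / D = ((A0 : ℝ) ^ (T + 1))⁻¹ := by
        rw [hD]
        field_simp
      have hBne : ((A0 : ℝ) ^ (T + 1)) ≠ 0 := by positivity
      have hG1 : G ≠ 0 := by rw [hG]; positivity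
      have hkey : (A0 : ℝ) ^ (T + 1) * (2 / D) ^ G ≤ 1 := by
        rw [h2D]
        have hinv1 : ((A0 : ℝ) ^ (T + 1))⁻¹ ≤ 1 := inv_le_one_of_one_le₀ hA0p
        have hinv0 : (0 : ℝ) ≤ ((A0 : ℝ) ^ (T + 1))⁻¹ := by positivity
        have h3 : (((A0 : ℝ) ^ (T + 1))⁻¹) ^ G ≤ ((A0 : ℝ) ^ (T + 1))⁻¹ :=
          pow_le_of_le_one hinv0 hinv1 hG1
        calc (A0 : ℝ) ^ (T + 1) * (((A0 : ℝ) ^ (T + 1))⁻¹) ^ G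
            ≤ (A0 : ℝ) ^ (T + 1) * ((A0 : ℝ) ^ (T + 1))⁻¹ :=
              mul_le_mul_of_nonneg_left h3 (by positivity)
          _ = 1 := mul_inv_cancel₀ hBne
      calc ((A0 : ℝ) * ((u : ℝ) + 1) ^ (r + 1)) ^ (T + 1)
          = (A0 : ℝ) ^ (T + 1) * (((u : ℝ) + 1) ^ (r + 1)) ^ (T + 1) := mul_pow _ _ _
        _ = (A0 : ℝ) ^ (T + 1) * ((u : ℝ) + 1) ^ G := by rw [← pow_mul, hG]
        _ ≤ (A0 : ℝ) ^ (T + 1) * (2 * (N : ℝ) ^ ε / D) ^ G := by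
            apply mul_le_mul_of_nonneg_left _ (by positivity)
            exact pow_le_pow_left₀ (by positivity) hub G
        _ = (A0 : ℝ) ^ (T + 1) * (2 / D) ^ G * ((N : ℝ) ^ ε) ^ G := by rw [hstep]; ring
        _ ≤ 1 * ((N : ℝ) ^ ε) ^ G := by
            apply mul_le_mul_of_nonneg_right hkey (by positivity)
        _ = ((N : ℝ) ^ ε) ^ G := one_mul _
        _ = (N : ℝ) ^ (ε * (G : ℝ)) := by
            rw [← Real.rpow_natCast ((N : ℝ) ^ ε) G, ← Real.rpow_mul (by linarith)]
        _ ≤ (N : ℝ) ^ (1 : ℝ) := Real.rpow_le_rpow_of_exponent_le hNR1 hεG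
        _ = (N : ℝ) := Real.rpow_one _
    have hNκ : (2 * (m * r * (u + 1) ^ r) * (r + u + 1)) ^ (r * m * (s - 1) + 1)
        ≤ Fintype.card V := by
      rw [hNV]
      have h1 : (2 * (m * r * (u + 1) ^ r) * (r + u + 1)) ^ (T + 1)
          ≤ (A0 * (u + 1) ^ (r + 1)) ^ (T + 1) := Nat.pow_le_pow_left hκA _
      have h2 : ((A0 * (u + 1) ^ (r + 1) : ℕ) : ℝ) ^ (T + 1) ≤ (N : ℝ) := by
        push_cast
        exact hreal
      have h3 : (A0 * (u + 1) ^ (r + 1)) ^ (T + 1) ≤ N := by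
        have := h2
        rw [← Nat.cast_pow] at this
        exact_mod_cast this
      calc (2 * (m * r * (u + 1) ^ r) * (r + u + 1)) ^ (T + 1)
          ≤ (A0 * (u + 1) ^ (r + 1)) ^ (T + 1) := h1
        _ ≤ N := h3
    obtain ⟨U, hUcard, hhom⟩ := Stmt11.main_nat hr hs hm E hEinj hM u hNκ
    refine ⟨U, ?_, hhom⟩
    rw [hUcard]
    have h5 : (N : ℝ) ^ ε / D - 1 ≤ (u : ℝ) := by linarith
    have h6 : (N : ℝ) ^ ε / (2 * D) ≤ (N : ℝ) ^ ε / D - 1 := by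
      have h7 : (N : ℝ) ^ ε / (2 * D) = ((N : ℝ) ^ ε / D) / 2 := by
        rw [div_div, mul_comm]
      linarith
    calc 1 / (2 * D) * (N : ℝ) ^ ε = (N : ℝ) ^ ε / (2 * D) := by ring
      _ ≤ (u : ℝ) := by linarith
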